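/- arXiv:math/0609172 — 3 statements merged into one kernel-verified Lean document; each statement's English description precedes it below -/
import Mathlib

section
/- Let I be a proper two-sided ideal of a ℤ-graded ring R. The map α : R[t]/⟨I*⟩ → R/I induced by F ↦ F_* (evaluation of t at 1) is a well-defined surjective ring homomorphism whose kernel is the ideal ⟨1 − t̄⟩, where t̄ is the image of t in R[t]/⟨I*⟩. -/
open DirectSum Polynomial
open scoped Classical

variable {R : Type*} [Ring R]

/-- The top degree of `f` (junk value `0` for `f = 0`). -/
noncomputable def deg (A : ℤ → AddSubgroup R) [GradedRing A] (f : R) : ℤ :=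
  WithBot.unbotD 0 ((DirectSum.decompose A f).support.max)

/-- The leading homogeneous part `LH f` of `f`. -/
noncomputable def LH (A : ℤ → AddSubgroup R) [GradedRing A] (f : R) : R :=
  (DirectSum.decompose A f (deg A f) : R)

/-- The homogenization `f*` of `f` with respect to the central degree-one variable `t = X`. -/
noncomputable def homog (A : ℤ → AddSubgroup R) [GradedRing A] (f : R) : Polynomial R :=
  ∑ i ∈ (DirectSum.decompose A f).support,
    Polynomial.C (DirectSum.decompose A f i : R) * Polynomial.X ^ (deg A f - i).toNat

/-- Dehomogenization `F ↦ F_*`, i.e. evaluation of `t = X` at `1`. -/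
noncomputable def dehom : Polynomial R →+* R :=
  Polynomial.eval₂RingHom' (RingHom.id R) 1 (fun a => Commute.one_right a)

/-- The degree-`p` component of the mixed gradation on `R[t]`, spanned by the
elements `a * t^j` with `a ∈ A i` and `i + j = p`. -/
noncomputable def mixed (A : ℤ → AddSubgroup R) (p : ℤ) : AddSubgroup (Polynomial R) :=
  AddSubgroup.closure
    { F | ∃ (i : ℤ) (j : ℕ) (a : R), a ∈ A i ∧ i + (j : ℤ) = p ∧
        F = Polynomial.C a * Polynomial.X ^ j }


lemma dehom_C (a : R) : dehom (Polynomial.C a) = a := by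
  simp [dehom]

lemma dehom_X : dehom (Polynomial.X : Polynomial R) = 1 := by
  simp [dehom]

lemma dehom_homog (A : ℤ → AddSubgroup R) [GradedRing A] (f : R) :
    dehom (homog A f) = f := by
  rw [homog, map_sum]
  rw [Finset.sum_congr rfl (fun i _ => by
    rw [map_mul, map_pow, dehom_C, dehom_X, one_pow, mul_one])]
  exact DirectSum.sum_support_decompose A f

lemma one_sub_pow_mem {S : Type*} [Ring S] (K : TwoSidedIdeal S) {y : S}
    (hy : 1 - y ∈ K) (n : ℕ) : 1 - y ^ n ∈ K := by
  induction n with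
  | zero => simpa using K.zero_mem
  | succ n ih =>
    have : 1 - y ^ (n + 1) = (1 - y) + y * (1 - y ^ n) := by rw [pow_succ']; noncomm_ring
    rw [this]
    exact K.add_mem hy (K.mul_mem_left _ _ ih)

lemma sub_C_dehom_mem {S : Type*} [Ring S] (φ : Polynomial R →+* S)
    (K : TwoSidedIdeal S) (hK : 1 - φ Polynomial.X ∈ K) (F : Polynomial R) :
    φ F - φ (Polynomial.C (dehom F)) ∈ K := by
  induction F using Polynomial.induction_on' with
  | add p q hp hq =>
    have : φ (p + q) - φ (Polynomial.C (dehom (p + q)))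
        = (φ p - φ (Polynomial.C (dehom p))) + (φ q - φ (Polynomial.C (dehom q))) := by
      simp only [map_add]; noncomm_ring
    rw [this]; exact K.add_mem hp hq
  | monomial n a =>
    rw [← Polynomial.C_mul_X_pow_eq_monomial]
    have h1 : dehom (Polynomial.C a * Polynomial.X ^ n) = a := by
      rw [map_mul, map_pow, dehom_C, dehom_X, one_pow, mul_one]
    rw [h1]
    have : φ (Polynomial.C a * Polynomial.X ^ n) - φ (Polynomial.C a)
        = -(φ (Polynomial.C a) * (1 - φ Polynomial.X ^ n)) := by
      simp only [map_mul, map_pow]; noncomm_ring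
    rw [this]
    exact K.neg_mem (K.mul_mem_left _ _ (one_sub_pow_mem K hK n))

/-- For a proper two-sided ideal `I` of `R`, dehomogenization induces a
well-defined surjective ring homomorphism `α : R[t]/⟨I*⟩ → R/I` with kernel `⟨1 - t̄⟩`. -/
theorem stmt7 (A : ℤ → AddSubgroup R) [GradedRing A] (I : TwoSidedIdeal R) (hI : I ≠ ⊤) :
    ∃ α : (TwoSidedIdeal.span (homog A '' (I : Set R))).ringCon.Quotient →+*
        I.ringCon.Quotient,
      (∀ F : Polynomial R,
        α ((TwoSidedIdeal.span (homog A '' (I : Set R))).ringCon.mk' F) =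
          I.ringCon.mk' (dehom F)) ∧
      Function.Surjective α ∧
      (∀ x, α x = 0 ↔ x ∈ TwoSidedIdeal.span
        {1 - (TwoSidedIdeal.span (homog A '' (I : Set R))).ringCon.mk' Polynomial.X}) := by
  classical
  set J : TwoSidedIdeal (Polynomial R) := TwoSidedIdeal.span (homog A '' (I : Set R)) with hJdef
  -- every element of J dehomogenizes into I
  have hJI : ∀ F ∈ J, dehom F ∈ I := by
    intro F hF
    have := TwoSidedIdeal.mem_span_iff.mp hF (I.comap (dehom (R := R)))
    refine (TwoSidedIdeal.mem_comap _).mp (this ?_)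
    rintro _ ⟨f, hf, rfl⟩
    exact (TwoSidedIdeal.mem_comap _).mpr (by rwa [dehom_homog])
  -- well-definedness
  have hwd : ∀ a b : Polynomial R, J.ringCon a b →
      I.ringCon.mk' (dehom a) = I.ringCon.mk' (dehom b) := by
    intro a b hab
    refine Quotient.sound' ?_
    show I.ringCon (dehom a) (dehom b)
    rw [TwoSidedIdeal.rel_iff] at hab ⊢
    rw [← map_sub]
    exact hJI _ hab
  let α : J.ringCon.Quotient →+* I.ringCon.Quotient :=
    { toFun := Quotient.lift (fun F => I.ringCon.mk' (dehom F)) hwd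
      map_one' := by show I.ringCon.mk' (dehom 1) = 1; rw [map_one, map_one]
      map_mul' := fun x y => Quotient.inductionOn₂' x y (fun a b => by
        show I.ringCon.mk' (dehom (a * b)) = I.ringCon.mk' (dehom a) * I.ringCon.mk' (dehom b)
        rw [map_mul, map_mul])
      map_zero' := by show I.ringCon.mk' (dehom 0) = 0; rw [map_zero, map_zero]
      map_add' := fun x y => Quotient.inductionOn₂' x y (fun a b => by
        show I.ringCon.mk' (dehom (a + b)) = I.ringCon.mk' (dehom a) + I.ringCon.mk' (dehom b)
        rw [map_add, map_add]) }
  have hα : ∀ F : Polynomial R, α (J.ringCon.mk' F) = I.ringCon.mk' (dehom F) := fun F => rfl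
  refine ⟨α, hα, ?_, ?_⟩
  · intro y
    refine Quotient.inductionOn' y (fun r => ⟨J.ringCon.mk' (Polynomial.C r), ?_⟩)
    rw [hα, dehom_C]
    rfl
  · set K : TwoSidedIdeal J.ringCon.Quotient :=
      TwoSidedIdeal.span {1 - J.ringCon.mk' Polynomial.X} with hKdef
    have hXK : 1 - J.ringCon.mk' Polynomial.X ∈ K :=
      TwoSidedIdeal.subset_span rfl
    have key : ∀ F : Polynomial R,
        J.ringCon.mk' F - J.ringCon.mk' (Polynomial.C (dehom F)) ∈ K :=
      sub_C_dehom_mem (J.ringCon.mk') K hXK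
    have hCI : ∀ f ∈ I, J.ringCon.mk' (Polynomial.C f) ∈ K := by
      intro f hf
      have h0 : J.ringCon.mk' (homog A f) = 0 := by
        refine Quotient.sound' ?_
        show J.ringCon (homog A f) 0
        rw [TwoSidedIdeal.rel_iff, sub_zero]
        exact TwoSidedIdeal.subset_span ⟨f, hf, rfl⟩
      have := key (homog A f)
      rw [dehom_homog, h0, zero_sub] at this
      simpa using K.neg_mem this
    intro x
    constructor
    · intro hx
      refine Quotient.inductionOn' x (fun F hx => ?_) hx
      have hFmem : dehom F ∈ I := by
        have : I.ringCon.mk' (dehom F) = 0 := hx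
        have h2 : I.ringCon (dehom F) 0 := Quotient.exact' this
        rwa [TwoSidedIdeal.rel_iff, sub_zero] at h2
      have : (Quotient.mk'' F : J.ringCon.Quotient) = J.ringCon.mk' F := rfl
      rw [this]
      have h3 : J.ringCon.mk' F
          = (J.ringCon.mk' F - J.ringCon.mk' (Polynomial.C (dehom F)))
            + J.ringCon.mk' (Polynomial.C (dehom F)) := (sub_add_cancel _ _).symm
      rw [h3]
      exact K.add_mem (key F) (hCI _ hFmem)
    · intro hx
      have : x ∈ TwoSidedIdeal.ker α := by
        refine TwoSidedIdeal.mem_span_iff.mp hx (TwoSidedIdeal.ker α) ?_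
        rintro _ rfl
        rw [SetLike.mem_coe, TwoSidedIdeal.mem_ker, map_sub, map_one, hα, dehom_X, map_one,
          sub_self]
      rwa [TwoSidedIdeal.mem_ker] at this
end

section
/- Let R = K⟨X⟩ be a free algebra over a field K with a graded monomial ordering ≽_{gr} extended to R[t] by w₁t^{r₁} ≻ w₂t^{r₂} iff w₁ ≻ w₂ or (w₁ = w₂ and r₁ > r₂). For a two-sided ideal I of R and 𝓖 ⊆ I: 𝓖 is a Gröbner basis of I in R if and only if 𝓖* = { g* : g ∈ 𝓖 } is a Gröbner basis of the homogenization ideal ⟨I*⟩ in R[t]. -/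
open Polynomial
open scoped Classical

variable {X K : Type*} [Field K] [LinearOrder (FreeMonoid X)]

/-- The leading monomial (as a word) of an element of the free algebra
`K⟨X⟩ = MonoidAlgebra K (FreeMonoid X)`, with junk value the empty word for `0`. -/
noncomputable def lm (f : MonoidAlgebra K (FreeMonoid X)) : FreeMonoid X :=
  WithBot.unbotD 1 f.coeff.support.max

/-- The set of leading monomials (viewed as elements of the free algebra) of the
nonzero elements of `S`. -/
noncomputable def LMset (S : Set (MonoidAlgebra K (FreeMonoid X))) :
    Set (MonoidAlgebra K (FreeMonoid X)) :=
  (fun f => MonoidAlgebra.single (lm f) (1 : K)) '' (S \ {0})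

/-- The degree (top word length) of an element of the free algebra. -/
noncomputable def dW (f : MonoidAlgebra K (FreeMonoid X)) : ℕ :=
  f.coeff.support.sup (fun w => w.length)

/-- The leading homogeneous part of an element of the free algebra. -/
noncomputable def LHm (f : MonoidAlgebra K (FreeMonoid X)) : MonoidAlgebra K (FreeMonoid X) :=
  MonoidAlgebra.ofCoeff (Finsupp.filter (fun w => w.length = dW f) f.coeff)

/-- The set of leading homogeneous parts of the nonzero elements of `S`. -/
noncomputable def LHset (S : Set (MonoidAlgebra K (FreeMonoid X))) :
    Set (MonoidAlgebra K (FreeMonoid X)) :=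
  LHm '' (S \ {0})

/-- A graded (length-compatible) ordering: words of smaller length are smaller. -/
def GradedOrder (X : Type*) [LinearOrder (FreeMonoid X)] : Prop :=
  ∀ u v : FreeMonoid X, u.length < v.length → u < v

/-- A monomial ordering: compatible with multiplication on both sides. -/
def MonomialOrder' (X : Type*) [LinearOrder (FreeMonoid X)] : Prop :=
  ∀ u v w : FreeMonoid X, u < v → w * u < w * v ∧ u * w < v * w
/-- The homogenization `f*` of an element of the free algebra, with respect to the central
commuting variable `t = X` of degree `1`. -/
noncomputable def homogF (f : MonoidAlgebra K (FreeMonoid X)) :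
    Polynomial (MonoidAlgebra K (FreeMonoid X)) :=
  ∑ w ∈ f.coeff.support,
    Polynomial.C (MonoidAlgebra.single w (f.coeff w)) * Polynomial.X ^ (dW f - w.length)
/-- The monomials `w t^r` occurring in an element of `K⟨X⟩[t]`, as elements of the
lexicographic product. -/
noncomputable def monomialsT (F : Polynomial (MonoidAlgebra K (FreeMonoid X))) :
    Finset (Lex (FreeMonoid X × ℕ)) :=
  F.support.biUnion (fun r => (F.coeff r).coeff.support.image (fun w => toLex (w, r)))

/-- The leading monomial of an element of `K⟨X⟩[t]` with respect to the extension of the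
monomial ordering given by `w₁t^{r₁} ≻ w₂t^{r₂}` iff `w₁ ≻ w₂`, or `w₁ = w₂` and `r₁ > r₂`
(junk value `1·t^0` for `0`). -/
noncomputable def lmt (F : Polynomial (MonoidAlgebra K (FreeMonoid X))) :
    Lex (FreeMonoid X × ℕ) :=
  WithBot.unbotD (toLex (1, 0)) (monomialsT F).max

/-- The set of leading monomials (viewed as elements of `K⟨X⟩[t]`) of the nonzero
elements of `S`. -/
noncomputable def LMTset (S : Set (Polynomial (MonoidAlgebra K (FreeMonoid X)))) :
    Set (Polynomial (MonoidAlgebra K (FreeMonoid X))) :=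
  (fun F => Polynomial.C (MonoidAlgebra.single ((ofLex (lmt F)).1) (1 : K)) *
      Polynomial.X ^ ((ofLex (lmt F)).2)) '' (S \ {0})


/-! ### Auxiliary lemmas -/

section SpanLemmas

theorem tsi_span_induction {R : Type*} [Ring R] {s : Set R} {p : R → Prop} {x : R}
    (hx : x ∈ TwoSidedIdeal.span s)
    (mem : ∀ a g b, g ∈ s → p (a * g * b))
    (zero : p 0) (add : ∀ x y, p x → p y → p (x + y)) (neg : ∀ x, p x → p (-x)) : p x := by
  rw [TwoSidedIdeal.mem_span_iff_mem_addSubgroup_closure] at hx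
  refine AddSubgroup.closure_induction (fun y hy => ?_) zero
    (fun a b _ _ ha hb => add a b ha hb) (fun a _ ha => neg a ha) hx
  obtain ⟨u, hu, b, -, rfl⟩ := hy
  obtain ⟨a, -, g, hg, rfl⟩ := hu
  exact mem a g b hg

theorem tsi_span_le {R : Type*} [Ring R] {s : Set R} {I : TwoSidedIdeal R}
    (h : s ⊆ I) {x : R} (hx : x ∈ TwoSidedIdeal.span s) : x ∈ I :=
  TwoSidedIdeal.mem_span_iff.mp hx I h

theorem tsi_map_span {R S : Type*} [Ring R] [Ring S] (φ : R →+* S) {s : Set R} {x : R}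
    (hx : x ∈ TwoSidedIdeal.span s) : φ x ∈ TwoSidedIdeal.span (φ '' s) := by
  refine tsi_span_induction (p := fun y => φ y ∈ TwoSidedIdeal.span (φ '' s)) hx
    (fun a g b hg => ?_) ?_ ?_ ?_
  · show φ (a * g * b) ∈ _
    rw [map_mul, map_mul]
    exact (TwoSidedIdeal.span _).mul_mem_right _ _
      ((TwoSidedIdeal.span _).mul_mem_left _ _
        (TwoSidedIdeal.subset_span ⟨g, hg, rfl⟩))
  · show φ 0 ∈ _
    rw [map_zero]; exact TwoSidedIdeal.zero_mem _
  · intro a b ha hb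
    show φ (a + b) ∈ _
    rw [map_add]; exact TwoSidedIdeal.add_mem _ ha hb
  · intro a ha
    show φ (-a) ∈ _
    rw [map_neg]; exact TwoSidedIdeal.neg_mem _ ha

theorem tsi_span_image_eq_iff {R S : Type*} [Ring R] [Ring S] (φ : R →+* S) (ψ : S →+* R)
    (hψφ : ∀ x, ψ (φ x) = x) (s t : Set R) :
    TwoSidedIdeal.span s = TwoSidedIdeal.span t ↔
      TwoSidedIdeal.span (φ '' s) = TwoSidedIdeal.span (φ '' t) := by
  have key : ∀ u v : Set R, TwoSidedIdeal.span u ≤ TwoSidedIdeal.span v →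
      TwoSidedIdeal.span (φ '' u) ≤ TwoSidedIdeal.span (φ '' v) := by
    intro u v huv x hx
    refine tsi_span_le (I := TwoSidedIdeal.span (φ '' v)) ?_ hx
    rintro y ⟨a, ha, rfl⟩
    exact tsi_map_span φ (huv (TwoSidedIdeal.subset_span ha))
  have key2 : ∀ u v : Set R, TwoSidedIdeal.span (φ '' u) ≤ TwoSidedIdeal.span (φ '' v) →
      TwoSidedIdeal.span u ≤ TwoSidedIdeal.span v := by
    intro u v huv x hx
    have h1 : φ x ∈ TwoSidedIdeal.span (φ '' v) := huv (tsi_map_span φ hx)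
    have h2 : ψ (φ x) ∈ TwoSidedIdeal.span (ψ '' (φ '' v)) := tsi_map_span ψ h1
    rw [hψφ] at h2
    rw [Set.image_image] at h2
    simpa only [hψφ, Set.image_id'] using h2
  constructor
  · intro h; exact le_antisymm (key _ _ h.le) (key _ _ h.ge)
  · intro h; exact le_antisymm (key2 _ _ h.le) (key2 _ _ h.ge)

end SpanLemmas

section MaxLemmas

theorem unbot'_max_eq {α : Type*} [LinearOrder α] {s : Finset α} {m : α} (hm : m ∈ s)
    (hle : ∀ x ∈ s, x ≤ m) (d : α) : WithBot.unbotD d s.max = m := by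
  have : s.max = (m : WithBot α) :=
    le_antisymm (Finset.max_le (fun a ha => WithBot.coe_le_coe.2 (hle a ha))) (Finset.le_max hm)
  rw [this]; rfl

theorem lm_spec {f : MonoidAlgebra K (FreeMonoid X)} (hf : f ≠ 0) :
    lm f ∈ f.coeff.support ∧ ∀ w ∈ f.coeff.support, w ≤ lm f := by
  obtain ⟨m, hm⟩ := Finset.max_of_nonempty
    (Finsupp.support_nonempty_iff.2 (mt MonoidAlgebra.coeff_eq_zero.1 hf))
  have h1 : lm f = m := by rw [lm, hm]; rfl
  have h2 : ∀ w ∈ f.coeff.support, w ≤ m := fun w hw =>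
    WithBot.coe_le_coe.1 (hm ▸ Finset.le_max hw)
  exact ⟨h1 ▸ Finset.mem_of_max hm, fun w hw => h1 ▸ h2 w hw⟩

theorem lm_eq {f : MonoidAlgebra K (FreeMonoid X)} {m : FreeMonoid X} (hm : m ∈ f.coeff.support)
    (hle : ∀ w ∈ f.coeff.support, w ≤ m) : lm f = m :=
  unbot'_max_eq hm hle 1

theorem dW_le {f : MonoidAlgebra K (FreeMonoid X)} {w : FreeMonoid X} (hw : w ∈ f.coeff.support) :
    w.length ≤ dW f := Finset.le_sup (f := fun w => w.length) hw

theorem lm_length (hgr : GradedOrder X) {f : MonoidAlgebra K (FreeMonoid X)} (hf : f ≠ 0) :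
    (lm f).length = dW f := by
  obtain ⟨hmem, hle⟩ := lm_spec hf
  obtain ⟨u, hu, hlen⟩ := Finset.exists_mem_eq_sup f.coeff.support
    (Finsupp.support_nonempty_iff.2 (mt MonoidAlgebra.coeff_eq_zero.1 hf)) (fun w => w.length)
  refine le_antisymm (dW_le hmem) ?_
  rw [dW, hlen]
  by_contra hlt
  exact absurd (hgr _ _ (lt_of_not_ge hlt)) (not_lt.2 (hle u hu))

end MaxLemmas

section MonomialsT

theorem mem_monomialsT {F : Polynomial (MonoidAlgebra K (FreeMonoid X))} {w : FreeMonoid X}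
    {r : ℕ} : toLex (w, r) ∈ monomialsT F ↔ (F.coeff r).coeff w ≠ 0 := by
  simp only [monomialsT, Finset.mem_biUnion, Finset.mem_image]
  constructor
  · rintro ⟨r', _, w', hw', heq⟩
    have : (w', r') = (w, r) := toLex.injective heq
    obtain ⟨rfl, rfl⟩ := Prod.mk.injEq .. ▸ this
    · exact Finsupp.mem_support_iff.1 hw'
  · intro h
    refine ⟨r, ?_, w, Finsupp.mem_support_iff.2 h, rfl⟩
    rw [Polynomial.mem_support_iff]
    intro h0
    exact h (by rw [h0]; rfl)

theorem monomialsT_nonempty {F : Polynomial (MonoidAlgebra K (FreeMonoid X))} (hF : F ≠ 0) :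
    (monomialsT F).Nonempty := by
  obtain ⟨r, hr⟩ := Polynomial.support_nonempty.2 hF
  have hcr : F.coeff r ≠ 0 := Polynomial.mem_support_iff.1 hr
  obtain ⟨w, hw⟩ := Finsupp.support_nonempty_iff.2 (mt MonoidAlgebra.coeff_eq_zero.1 hcr)
  exact ⟨toLex (w, r), mem_monomialsT.2 (Finsupp.mem_support_iff.1 hw)⟩

theorem lmt_spec {F : Polynomial (MonoidAlgebra K (FreeMonoid X))} (hF : F ≠ 0) :
    lmt F ∈ monomialsT F ∧ ∀ m ∈ monomialsT F, m ≤ lmt F := by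
  obtain ⟨m, hm⟩ := Finset.max_of_nonempty (monomialsT_nonempty hF)
  have h1 : lmt F = m := by rw [lmt, hm]; rfl
  have h2 : ∀ x ∈ monomialsT F, x ≤ m := fun x hx =>
    WithBot.coe_le_coe.1 (hm ▸ Finset.le_max hx)
  exact ⟨h1 ▸ Finset.mem_of_max hm, fun x hx => h1 ▸ h2 x hx⟩

theorem lmt_eq {F : Polynomial (MonoidAlgebra K (FreeMonoid X))} {m : Lex (FreeMonoid X × ℕ)}
    (hm : m ∈ monomialsT F) (hle : ∀ x ∈ monomialsT F, x ≤ m) : lmt F = m :=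
  unbot'_max_eq hm hle _

end MonomialsT

section HomogF

theorem homogF_coeff_apply (h : MonoidAlgebra K (FreeMonoid X)) (r : ℕ) (w : FreeMonoid X) :
    ((homogF h).coeff r).coeff w = if dW h - w.length = r then h.coeff w else 0 := by
  rw [homogF, Polynomial.finset_sum_coeff]
  simp only [Polynomial.C_mul_X_pow_eq_monomial, Polynomial.coeff_monomial]
  rw [MonoidAlgebra.coeff_sum, Finsupp.finset_sum_apply]
  have hterm : ∀ w' ∈ h.coeff.support,
      ((if dW h - w'.length = r then MonoidAlgebra.single w' (h.coeff w') else 0) : MonoidAlgebra K (FreeMonoid X)).coeff w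
        = if w' = w then (if dW h - w.length = r then h.coeff w else 0) else 0 := by
    intro w' _
    by_cases h1 : w' = w
    · subst h1
      by_cases h2 : dW h - w'.length = r
      · simp [h2, MonoidAlgebra.coeff_single_apply]
      · simp [h2]
    · by_cases h2 : dW h - w'.length = r
      · simp [h2, MonoidAlgebra.coeff_single_apply, h1]
      · simp [h2, h1]
  rw [Finset.sum_congr rfl hterm, Finset.sum_ite_eq' h.coeff.support w
    (fun _ => if dW h - w.length = r then h.coeff w else 0)]
  by_cases hw : w ∈ h.coeff.support
  · simp [hw]
  · have : h.coeff w = 0 := Finsupp.notMem_support_iff.1 hw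
    simp [hw, this]

theorem homogF_zero : homogF (0 : MonoidAlgebra K (FreeMonoid X)) = 0 := by
  simp [homogF]

/-- Evaluation at `t = 1`, the dehomogenization ring homomorphism. -/
noncomputable def evalOne :
    Polynomial (MonoidAlgebra K (FreeMonoid X)) →+* MonoidAlgebra K (FreeMonoid X) :=
  Polynomial.eval₂RingHom' (RingHom.id _) 1 (fun _ => Commute.one_right _)

theorem evalOne_C (a : MonoidAlgebra K (FreeMonoid X)) : evalOne (Polynomial.C a) = a :=
  Polynomial.eval₂_C _ _

theorem evalOne_apply (F : Polynomial (MonoidAlgebra K (FreeMonoid X))) :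
    evalOne F = ∑ r ∈ F.support, F.coeff r := by
  show Polynomial.eval₂ (RingHom.id _) 1 F = _
  rw [Polynomial.eval₂_eq_sum, Polynomial.sum_def]
  refine Finset.sum_congr rfl fun r _ => ?_
  simp

theorem evalOne_homogF (h : MonoidAlgebra K (FreeMonoid X)) : evalOne (homogF h) = h := by
  rw [homogF, map_sum]
  have : ∀ w ∈ h.coeff.support,
      evalOne (Polynomial.C (MonoidAlgebra.single w (h.coeff w)) *
        Polynomial.X ^ (dW h - w.length)) = MonoidAlgebra.single w (h.coeff w) := by
    intro w _
    rw [map_mul, map_pow, evalOne_C]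
    have : evalOne (Polynomial.X : Polynomial (MonoidAlgebra K (FreeMonoid X))) = 1 :=
      Polynomial.eval₂_X _ _
    rw [this, one_pow, mul_one]
  rw [Finset.sum_congr rfl this]
  exact MonoidAlgebra.sum_coeff_single h

theorem homogF_ne_zero {h : MonoidAlgebra K (FreeMonoid X)} (hh : h ≠ 0) : homogF h ≠ 0 := by
  intro h0
  exact hh (by rw [← evalOne_homogF h, h0, map_zero])

theorem lmt_homogF (hgr : GradedOrder X) {h : MonoidAlgebra K (FreeMonoid X)} (hh : h ≠ 0) :
    lmt (homogF h) = toLex (lm h, 0) := by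
  obtain ⟨hmem, hle⟩ := lm_spec hh
  have hlen : (lm h).length = dW h := lm_length hgr hh
  refine lmt_eq ?_ ?_
  · rw [mem_monomialsT, homogF_coeff_apply]
    have : dW h - (lm h).length = 0 := by omega
    rw [if_pos this]
    exact Finsupp.mem_support_iff.1 hmem
  · intro m hm
    set w := (ofLex m).1 with hw
    set r := (ofLex m).2 with hr
    have hm' : toLex (w, r) ∈ monomialsT (homogF h) := by
      have : toLex (w, r) = m := by
        rw [hw, hr]
        rfl
      rw [this]; exact hm
    rw [mem_monomialsT, homogF_coeff_apply] at hm'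
    have hr' : dW h - w.length = r ∧ h.coeff w ≠ 0 := by
      by_cases hc : dW h - w.length = r
      · exact ⟨hc, by rwa [if_pos hc] at hm'⟩
      · exact absurd rfl (by rwa [if_neg hc] at hm')
    have hww : w ≤ lm h := hle w (Finsupp.mem_support_iff.2 hr'.2)
    have : m = toLex (w, r) := by rw [hw, hr]; rfl
    rw [this, Prod.Lex.le_iff]
    rcases lt_or_eq_of_le hww with h1 | h1
    · exact Or.inl h1
    · refine Or.inr ⟨h1, ?_⟩
      have : w.length = dW h := by rw [h1, hlen]
      simp only [ofLex_toLex]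
      omega

end HomogF

section Hcomp

/-- `Finsupp.filter` with hard `MonoidAlgebra` types, to keep instances uniform. -/
noncomputable def maFilter (p : FreeMonoid X → Prop) (f : MonoidAlgebra K (FreeMonoid X)) :
    MonoidAlgebra K (FreeMonoid X) :=
  MonoidAlgebra.ofCoeff (Finsupp.filter p f.coeff)

theorem maFilter_apply (p : FreeMonoid X → Prop) (f : MonoidAlgebra K (FreeMonoid X))
    (a : FreeMonoid X) : (maFilter p f).coeff a = if p a then f.coeff a else 0 := rfl

theorem maFilter0 (p : FreeMonoid X → Prop) :
    maFilter p (0 : MonoidAlgebra K (FreeMonoid X)) = 0 :=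
  congrArg MonoidAlgebra.ofCoeff (Finsupp.filter_zero p)

theorem maFilter_add (p : FreeMonoid X → Prop) (f g : MonoidAlgebra K (FreeMonoid X)) :
    maFilter p (f + g) = maFilter p f + maFilter p g :=
  congrArg MonoidAlgebra.ofCoeff Finsupp.filter_add

theorem maFilter_neg (p : FreeMonoid X → Prop) (f : MonoidAlgebra K (FreeMonoid X)) :
    maFilter p (-f) = -maFilter p f :=
  congrArg MonoidAlgebra.ofCoeff (Finsupp.filter_neg p f.coeff)

theorem maFilter_single_of_pos (p : FreeMonoid X → Prop) {a : FreeMonoid X} {b : K}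
    (h : p a) : maFilter p (MonoidAlgebra.single a b) = MonoidAlgebra.single a b :=
  congrArg MonoidAlgebra.ofCoeff (Finsupp.filter_single_of_pos _ h)

theorem maFilter_single_of_neg (p : FreeMonoid X → Prop) {a : FreeMonoid X} {b : K}
    (h : ¬ p a) : maFilter p (MonoidAlgebra.single a b) = 0 :=
  congrArg MonoidAlgebra.ofCoeff (Finsupp.filter_single_of_neg _ h)

theorem maFilter_sum (p : FreeMonoid X → Prop) {ι : Type*} (s : Finset ι)
    (f : ι → MonoidAlgebra K (FreeMonoid X)) :
    maFilter p (∑ i ∈ s, f i) = ∑ i ∈ s, maFilter p (f i) := by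
  induction s using Finset.cons_induction with
  | empty => simp [maFilter0]
  | cons i s hi ih => rw [Finset.sum_cons, Finset.sum_cons, maFilter_add, ih]

theorem malg_induction_linear {p : MonoidAlgebra K (FreeMonoid X) → Prop}
    (f : MonoidAlgebra K (FreeMonoid X)) (h0 : p 0)
    (hadd : ∀ f g : MonoidAlgebra K (FreeMonoid X), p f → p g → p (f + g))
    (hsingle : ∀ (a : FreeMonoid X) (b : K), p (MonoidAlgebra.single a b)) : p f :=
  MonoidAlgebra.induction_linear f h0 hadd hsingle

/-- The homogeneous component of degree `d` (total degree: word length plus `t`-degree). -/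
noncomputable def hcomp (d : ℕ) (F : Polynomial (MonoidAlgebra K (FreeMonoid X))) :
    Polynomial (MonoidAlgebra K (FreeMonoid X)) :=
  ∑ r ∈ F.support, Polynomial.monomial r
    (maFilter (fun w : FreeMonoid X => w.length + r = d) (F.coeff r))

theorem hcomp_coeff (d r : ℕ) (F : Polynomial (MonoidAlgebra K (FreeMonoid X))) :
    (hcomp d F).coeff r =
      maFilter (fun w : FreeMonoid X => w.length + r = d) (F.coeff r) := by
  rw [hcomp, Polynomial.finset_sum_coeff]
  simp only [Polynomial.coeff_monomial]
  rw [Finset.sum_ite_eq' F.support r]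
  by_cases hr : r ∈ F.support
  · rw [if_pos hr]
  · rw [if_neg hr, Polynomial.notMem_support_iff.1 hr, maFilter0]

theorem filter_len_mul (d i j : ℕ) (f g : MonoidAlgebra K (FreeMonoid X)) :
    maFilter (fun w : FreeMonoid X => w.length + (i + j) = d) (f * g) =
      ∑ p ∈ Finset.HasAntidiagonal.antidiagonal d,
        maFilter (fun w : FreeMonoid X => w.length + i = p.1) f *
          maFilter (fun w : FreeMonoid X => w.length + j = p.2) g := by
  induction f using malg_induction_linear with
  | h0 =>
    rw [zero_mul, maFilter0]
    refine Eq.symm (Finset.sum_eq_zero fun p _ => ?_)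
    rw [maFilter0, zero_mul]
  | hadd f₁ f₂ h₁ h₂ =>
    rw [add_mul, maFilter_add, h₁, h₂, ← Finset.sum_add_distrib]
    refine Eq.symm (Finset.sum_congr rfl fun p _ => ?_)
    rw [maFilter_add, add_mul]
  | hsingle u c =>
    induction g using malg_induction_linear with
    | h0 =>
      rw [mul_zero, maFilter0]
      refine Eq.symm (Finset.sum_eq_zero fun p _ => ?_)
      rw [maFilter0, mul_zero]
    | hadd g₁ g₂ h₁ h₂ =>
      rw [mul_add, maFilter_add, h₁, h₂, ← Finset.sum_add_distrib]
      refine Eq.symm (Finset.sum_congr rfl fun p _ => ?_)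
      rw [maFilter_add, mul_add]
    | hsingle v e =>
      have hss : (MonoidAlgebra.single u c : MonoidAlgebra K (FreeMonoid X)) *
          MonoidAlgebra.single v e = MonoidAlgebra.single (u * v) (c * e) :=
        MonoidAlgebra.single_mul_single _ _ _ _
      rw [hss]
      have hterm : ∀ p ∈ Finset.HasAntidiagonal.antidiagonal d,
          (maFilter (fun w : FreeMonoid X => w.length + i = p.1)
              (MonoidAlgebra.single u c) *
            maFilter (fun w : FreeMonoid X => w.length + j = p.2)
              (MonoidAlgebra.single v e))
          = if p = (u.length + i, v.length + j)
              then (MonoidAlgebra.single (u * v) (c * e) :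
                MonoidAlgebra K (FreeMonoid X)) else 0 := by
        intro p _
        by_cases h1 : u.length + i = p.1
        · by_cases h2 : v.length + j = p.2
          · rw [maFilter_single_of_pos (fun w : FreeMonoid X => w.length + i = p.1) (a := u) h1,
              maFilter_single_of_pos (fun w : FreeMonoid X => w.length + j = p.2) (a := v) h2,
              if_pos (by rw [Prod.ext_iff]; exact ⟨h1.symm, h2.symm⟩)]
            exact hss
          · rw [maFilter_single_of_neg (fun w : FreeMonoid X => w.length + j = p.2) (a := v) h2, mul_zero,
              if_neg (by intro hp; exact h2 (by rw [hp]))]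
        · rw [maFilter_single_of_neg (fun w : FreeMonoid X => w.length + i = p.1) (a := u) h1, zero_mul,
            if_neg (by intro hp; exact h1 (by rw [hp]))]
      rw [Finset.sum_congr rfl hterm, Finset.sum_ite_eq' (Finset.HasAntidiagonal.antidiagonal d)
        ((u.length + i, v.length + j) : ℕ × ℕ)
        (fun _ => (MonoidAlgebra.single (u * v) (c * e) : MonoidAlgebra K (FreeMonoid X)))]
      by_cases hc : (u * v).length + (i + j) = d
      · rw [maFilter_single_of_pos (fun w : FreeMonoid X => w.length + (i + j) = d) (a := u * v) hc, if_pos]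
        rw [Finset.HasAntidiagonal.mem_antidiagonal]
        rw [FreeMonoid.length_mul] at hc
        omega
      · rw [maFilter_single_of_neg (fun w : FreeMonoid X => w.length + (i + j) = d) (a := u * v) hc, if_neg]
        rw [Finset.HasAntidiagonal.mem_antidiagonal]
        rw [FreeMonoid.length_mul] at hc
        omega

theorem hcomp_mul (d : ℕ) (F G : Polynomial (MonoidAlgebra K (FreeMonoid X))) :
    hcomp d (F * G) = ∑ p ∈ Finset.HasAntidiagonal.antidiagonal d, hcomp p.1 F * hcomp p.2 G := by
  apply Polynomial.ext
  intro r
  rw [hcomp_coeff, Polynomial.coeff_mul, maFilter_sum]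
  have hterm : ∀ x ∈ Finset.HasAntidiagonal.antidiagonal r,
      maFilter (fun w : FreeMonoid X => w.length + r = d) (F.coeff x.1 * G.coeff x.2)
        = ∑ p ∈ Finset.HasAntidiagonal.antidiagonal d,
            maFilter (fun w : FreeMonoid X => w.length + x.1 = p.1) (F.coeff x.1) *
              maFilter (fun w : FreeMonoid X => w.length + x.2 = p.2) (G.coeff x.2) := by
    intro x hx
    rw [Finset.HasAntidiagonal.mem_antidiagonal] at hx
    rw [← hx]
    exact filter_len_mul d x.1 x.2 (F.coeff x.1) (G.coeff x.2)
  rw [Finset.sum_congr rfl hterm, Finset.sum_comm]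
  rw [Polynomial.finset_sum_coeff]
  refine Finset.sum_congr rfl fun p _ => ?_
  rw [Polynomial.coeff_mul]
  refine Finset.sum_congr rfl fun x _ => ?_
  rw [hcomp_coeff, hcomp_coeff]

/-- `F` is homogeneous of total degree `d`. -/
def IsHomogT (d : ℕ) (F : Polynomial (MonoidAlgebra K (FreeMonoid X))) : Prop :=
  ∀ r : ℕ, ∀ w ∈ (F.coeff r).coeff.support, w.length + r = d

theorem hcomp_of_isHomogT {d e : ℕ} {F : Polynomial (MonoidAlgebra K (FreeMonoid X))}
    (h : IsHomogT d F) : hcomp e F = if e = d then F else 0 := by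
  apply Polynomial.ext
  intro r
  rw [hcomp_coeff]
  by_cases he : e = d
  · subst he
    rw [if_pos rfl]
    ext w
    rw [maFilter_apply]
    by_cases hw : w.length + r = e
    · rw [if_pos hw]
    · rw [if_neg hw]
      symm
      rw [← Finsupp.notMem_support_iff]
      intro hmem
      exact hw (h r w hmem)
  · rw [if_neg he, Polynomial.coeff_zero]
    ext w
    rw [maFilter_apply]
    by_cases hw : w.length + r = e
    · rw [if_pos hw]
      rw [MonoidAlgebra.coeff_zero, Finsupp.coe_zero, Pi.zero_apply]
      by_contra h0
      exact he ((hw ▸ h r w (Finsupp.mem_support_iff.2 fun hh => h0 hh)) ▸ rfl)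
    · rw [if_neg hw]
      simp

theorem isHomogT_homogF (h : MonoidAlgebra K (FreeMonoid X)) : IsHomogT (dW h) (homogF h) := by
  intro r w hw
  have h1 := Finsupp.mem_support_iff.1 hw
  rw [homogF_coeff_apply] at h1
  by_cases hc : dW h - w.length = r
  · rw [if_pos hc] at h1
    have : w ∈ h.coeff.support := Finsupp.mem_support_iff.2 h1
    have := dW_le this
    omega
  · rw [if_neg hc] at h1
    exact absurd rfl h1

theorem hcomp_zero (d : ℕ) : hcomp d (0 : Polynomial (MonoidAlgebra K (FreeMonoid X))) = 0 := by
  simp [hcomp]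

theorem hcomp_add (d : ℕ) (F G : Polynomial (MonoidAlgebra K (FreeMonoid X))) :
    hcomp d (F + G) = hcomp d F + hcomp d G := by
  apply Polynomial.ext
  intro r
  rw [Polynomial.coeff_add, hcomp_coeff, hcomp_coeff, hcomp_coeff, Polynomial.coeff_add,
    maFilter_add]

theorem hcomp_neg (d : ℕ) (F : Polynomial (MonoidAlgebra K (FreeMonoid X))) :
    hcomp d (-F) = -hcomp d F := by
  apply Polynomial.ext
  intro r
  rw [hcomp_coeff, Polynomial.coeff_neg, Polynomial.coeff_neg, hcomp_coeff]
  exact maFilter_neg _ _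

theorem hcomp_mem_span {S : Set (MonoidAlgebra K (FreeMonoid X))}
    {F : Polynomial (MonoidAlgebra K (FreeMonoid X))}
    (hF : F ∈ TwoSidedIdeal.span (homogF '' S)) (d : ℕ) :
    hcomp d F ∈ TwoSidedIdeal.span (homogF '' S) := by
  revert d
  refine tsi_span_induction (p := fun F => ∀ d,
    hcomp d F ∈ TwoSidedIdeal.span (homogF '' S)) hF ?_ ?_ ?_ ?_
  · rintro a g b ⟨s, hs, rfl⟩ d
    show hcomp d (a * homogF s * b) ∈ _
    rw [hcomp_mul]
    refine TwoSidedIdeal.finsetSum_mem _ _ _ fun p _ => ?_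
    refine (TwoSidedIdeal.span _).mul_mem_right _ _ ?_
    rw [hcomp_mul]
    refine TwoSidedIdeal.finsetSum_mem _ _ _ fun q _ => ?_
    rw [hcomp_of_isHomogT (isHomogT_homogF s)]
    split_ifs
    · exact (TwoSidedIdeal.span _).mul_mem_left _ _
        (TwoSidedIdeal.subset_span ⟨s, hs, rfl⟩)
    · rw [mul_zero]; exact TwoSidedIdeal.zero_mem _
  · intro d
    show hcomp d 0 ∈ _
    rw [hcomp_zero]; exact TwoSidedIdeal.zero_mem _
  · intro x y hx hy d
    show hcomp d (x + y) ∈ _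
    rw [hcomp_add]; exact TwoSidedIdeal.add_mem _ (hx d) (hy d)
  · intro x hx d
    show hcomp d (-x) ∈ _
    rw [hcomp_neg]; exact TwoSidedIdeal.neg_mem _ (hx d)

end Hcomp

section KeyLemmas

theorem exists_of_mem_spanHomog (I : TwoSidedIdeal (MonoidAlgebra K (FreeMonoid X)))
    {F : Polynomial (MonoidAlgebra K (FreeMonoid X))}
    (hF : F ∈ TwoSidedIdeal.span (homogF '' (I : Set (MonoidAlgebra K (FreeMonoid X)))))
    (hF0 : F ≠ 0) :
    ∃ h : MonoidAlgebra K (FreeMonoid X), h ∈ (I : Set (MonoidAlgebra K (FreeMonoid X))) ∧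
      h ≠ 0 ∧ lm h = (ofLex (lmt F)).1 := by
  obtain ⟨hmem, hle⟩ := lmt_spec hF0
  set w := (ofLex (lmt F)).1 with hwdef
  set r := (ofLex (lmt F)).2 with hrdef
  have hlmtF : lmt F = toLex (w, r) := by rw [hwdef, hrdef]; rfl
  set D := w.length + r with hDdef
  set H := hcomp D F with hHdef
  set h := evalOne H with hhdef
  have hFcoeff : (F.coeff r).coeff w ≠ 0 := mem_monomialsT.1 (hlmtF ▸ hmem)
  -- value formula for h
  have hval : ∀ w' : FreeMonoid X,
      h.coeff w' = ∑ r' ∈ H.support, if w'.length + r' = D then (F.coeff r').coeff w' else 0 := by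
    intro w'
    rw [hhdef, evalOne_apply, MonoidAlgebra.coeff_sum, Finsupp.finset_sum_apply]
    refine Finset.sum_congr rfl fun r' _ => ?_
    rw [hHdef, hcomp_coeff, maFilter_apply]
    convert rfl
  have hhw : h.coeff w = (F.coeff r).coeff w := by
    rw [hval w]
    have : ∀ r' ∈ H.support,
        (if w.length + r' = D then (F.coeff r').coeff w else 0)
          = if r' = r then (F.coeff r').coeff w else 0 := by
      intro r' _
      refine if_congr ?_ rfl rfl
      omega
    rw [Finset.sum_congr rfl this, Finset.sum_ite_eq' H.support r (fun r' => (F.coeff r').coeff w)]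
    by_cases hr : r ∈ H.support
    · rw [if_pos hr]
    · rw [if_neg hr]
      have h0 : H.coeff r = 0 := Polynomial.notMem_support_iff.1 hr
      have : (H.coeff r).coeff w = (F.coeff r).coeff w := by
        rw [hHdef, hcomp_coeff, maFilter_apply, if_pos (by omega)]
      rw [h0] at this
      exact this
  have hh0 : h ≠ 0 := by
    intro h0
    rw [h0] at hhw
    exact hFcoeff hhw.symm
  have hsupp : ∀ w' ∈ h.coeff.support, w' ≤ w := by
    intro w' hw'
    have hne : h.coeff w' ≠ 0 := Finsupp.mem_support_iff.1 hw'
    rw [hval w'] at hne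
    obtain ⟨r', _, hterm⟩ := Finset.exists_ne_zero_of_sum_ne_zero hne
    by_cases hc : w'.length + r' = D
    · rw [if_pos hc] at hterm
      have hmem' : toLex (w', r') ∈ monomialsT F := mem_monomialsT.2 hterm
      have := hle _ hmem'
      rw [hlmtF, Prod.Lex.le_iff] at this
      rcases this with h1 | h1
      · exact le_of_lt h1
      · exact le_of_eq h1.1
    · rw [if_neg hc] at hterm
      exact absurd rfl hterm
  have hwsupp : w ∈ h.coeff.support := Finsupp.mem_support_iff.2 (hhw ▸ hFcoeff)
  refine ⟨h, ?_, hh0, lm_eq hwsupp hsupp⟩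
  -- h ∈ I
  have hHmem : H ∈ TwoSidedIdeal.span
      (homogF '' (I : Set (MonoidAlgebra K (FreeMonoid X)))) := hcomp_mem_span hF D
  have := tsi_map_span evalOne hHmem
  refine tsi_span_le (I := I) ?_ this
  rintro y ⟨z, ⟨a, ha, rfl⟩, rfl⟩
  rw [evalOne_homogF]
  exact ha

theorem LMTset_homogF_image (hgr : GradedOrder X) (S : Set (MonoidAlgebra K (FreeMonoid X))) :
    LMTset (homogF '' S) = Polynomial.C '' (LMset S) := by
  ext y
  constructor
  · rintro ⟨F, ⟨⟨g, hg, rfl⟩, hF0⟩, rfl⟩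
    have hg0 : g ≠ 0 := by
      rintro rfl
      exact hF0 (by rw [homogF_zero]; rfl)
    beta_reduce
    rw [lmt_homogF hgr hg0]
    refine ⟨MonoidAlgebra.single (lm g) 1, ⟨g, ⟨hg, hg0⟩, rfl⟩, ?_⟩
    simp
  · rintro ⟨x, ⟨g, ⟨hg, hg0'⟩, rfl⟩, rfl⟩
    have hg0 : g ≠ 0 := hg0'
    refine ⟨homogF g, ⟨⟨g, hg, rfl⟩, homogF_ne_zero hg0⟩, ?_⟩
    beta_reduce
    rw [lmt_homogF hgr hg0]
    simp

theorem span_LMTset_ideal (hgr : GradedOrder X)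
    (I : TwoSidedIdeal (MonoidAlgebra K (FreeMonoid X))) :
    TwoSidedIdeal.span (LMTset
        ((TwoSidedIdeal.span (homogF '' (I : Set (MonoidAlgebra K (FreeMonoid X)))) :
          TwoSidedIdeal (Polynomial (MonoidAlgebra K (FreeMonoid X)))) :
            Set (Polynomial (MonoidAlgebra K (FreeMonoid X))))) =
      TwoSidedIdeal.span (Polynomial.C '' LMset (I : Set (MonoidAlgebra K (FreeMonoid X)))) := by
  apply le_antisymm
  · intro x hx
    refine tsi_span_le (I := TwoSidedIdeal.span _) ?_ hx
    rintro y ⟨F, ⟨hFJ, hF0'⟩, rfl⟩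
    beta_reduce
    have hF0 : F ≠ 0 := hF0'
    obtain ⟨h, hI, hh0, hlm⟩ := exists_of_mem_spanHomog I hFJ hF0
    refine (TwoSidedIdeal.span _).mul_mem_right _ _ ?_
    refine TwoSidedIdeal.subset_span ⟨MonoidAlgebra.single (lm h) 1, ⟨h, ⟨hI, hh0⟩, rfl⟩, ?_⟩
    rw [hlm]
  · intro x hx
    refine tsi_span_le (I := TwoSidedIdeal.span _) ?_ hx
    rintro y ⟨z, ⟨g, ⟨hg, hg0'⟩, rfl⟩, rfl⟩
    have hg0 : g ≠ 0 := hg0'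
    have hFJ : homogF g ∈ TwoSidedIdeal.span
        (homogF '' (I : Set (MonoidAlgebra K (FreeMonoid X)))) :=
      TwoSidedIdeal.subset_span ⟨g, hg, rfl⟩
    have : Polynomial.C (MonoidAlgebra.single (lm g) (1 : K)) ∈ LMTset
        ((TwoSidedIdeal.span (homogF '' (I : Set (MonoidAlgebra K (FreeMonoid X)))) :
          TwoSidedIdeal (Polynomial (MonoidAlgebra K (FreeMonoid X)))) :
            Set (Polynomial (MonoidAlgebra K (FreeMonoid X)))) := by
      refine ⟨homogF g, ⟨hFJ, homogF_ne_zero hg0⟩, ?_⟩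
      beta_reduce
      rw [lmt_homogF hgr hg0]
      simp
    exact TwoSidedIdeal.subset_span this

end KeyLemmas

/-- `𝒢 ⊆ I` is a Gröbner basis of `I` in `K⟨X⟩` iff
`𝒢* = {g* : g ∈ 𝒢}` is a Gröbner basis of the homogenization ideal `⟨I*⟩` in `K⟨X⟩[t]`,
with respect to the extended monomial ordering. -/
theorem stmt17 (hgr : GradedOrder X) (hmo : MonomialOrder' X)
    (hwf : WellFoundedLT (FreeMonoid X))
    (I : TwoSidedIdeal (MonoidAlgebra K (FreeMonoid X)))
    (G : Set (MonoidAlgebra K (FreeMonoid X))) (hGI : G ⊆ (I : Set _)) :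
    TwoSidedIdeal.span (LMset (I : Set (MonoidAlgebra K (FreeMonoid X)))) =
        TwoSidedIdeal.span (LMset G) ↔
      TwoSidedIdeal.span (LMTset
          ((TwoSidedIdeal.span (homogF '' (I : Set (MonoidAlgebra K (FreeMonoid X)))) :
            TwoSidedIdeal (Polynomial (MonoidAlgebra K (FreeMonoid X)))) :
              Set (Polynomial (MonoidAlgebra K (FreeMonoid X))))) =
        TwoSidedIdeal.span (LMTset (homogF '' G)) := by
  rw [span_LMTset_ideal hgr I, LMTset_homogF_image hgr G]
  exact tsi_span_image_eq_iff Polynomial.C evalOne evalOne_C _ _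
end

section
/- Let R = K⟨X⟩ be a free algebra over a field K graded by word length, I a two-sided ideal, and A = R/I. If ⟨LM(I)⟩ = ⟨LM(𝓖)⟩ for some 𝓖 ⊆ I with respect to a graded monomial ordering, then for every nonzero f ∈ I there exist λ_j ∈ K, words u_j, v_j, and g_j ∈ 𝓖 with f = Σ_j λ_j u_j g_j v_j, u_j LM(g_j) v_j ≠ 0, LM(f) ≽ LM(u_j g_j v_j), and d(u_j) + d(g_j) + d(v_j) ≤ d(f) for all j. -/
open Polynomial
open scoped Classical

variable {X K : Type*} [Field K] [LinearOrder (FreeMonoid X)]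

/-! ### Auxiliary lemmas -/

lemma aux_lm_mem_support {f : MonoidAlgebra K (FreeMonoid X)} (hf : f ≠ 0) :
    lm f ∈ f.coeff.support := by
  obtain ⟨m, hm⟩ := Finset.max_of_nonempty (Finsupp.support_nonempty_iff.2 (MonoidAlgebra.coeff_eq_zero.not.2 hf))
  have : lm f = m := by rw [lm, hm]; rfl
  rw [this]
  exact Finset.mem_of_max hm

lemma aux_le_lm {f : MonoidAlgebra K (FreeMonoid X)} {m : FreeMonoid X}
    (hm : m ∈ f.coeff.support) : m ≤ lm f := by
  obtain ⟨a, ha⟩ := Finset.max_of_mem hm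
  have h1 : lm f = a := by rw [lm, ha]; rfl
  have h2 : (m : WithBot (FreeMonoid X)) ≤ a := ha ▸ Finset.le_max hm
  rw [h1]
  exact_mod_cast h2

lemma aux_lm_single {m : FreeMonoid X} {c : K} (hc : c ≠ 0) :
    lm (MonoidAlgebra.single m c) = m := by
  rw [lm, MonoidAlgebra.coeff_single, Finsupp.support_single_ne_zero _ hc]
  rfl

lemma aux_mul_le (hmo : MonomialOrder' X) {u v : FreeMonoid X} (h : u ≤ v) (w : FreeMonoid X) :
    w * u ≤ w * v ∧ u * w ≤ v * w := by
  rcases h.lt_or_eq with h | h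
  · exact ⟨(hmo u v w h).1.le, (hmo u v w h).2.le⟩
  · subst h; exact ⟨le_rfl, le_rfl⟩

lemma aux_lm_mul (hmo : MonomialOrder' X) {a b : MonoidAlgebra K (FreeMonoid X)}
    (ha : a ≠ 0) (hb : b ≠ 0) :
    a * b ≠ 0 ∧ lm (a * b) = lm a * lm b ∧ (a * b).coeff (lm a * lm b) = a.coeff (lm a) * b.coeff (lm b) := by
  classical
  have hcoeff : (a * b).coeff (lm a * lm b) = a.coeff (lm a) * b.coeff (lm b) := by
    rw [MonoidAlgebra.coeff_mul, Finsupp.sum, Finset.sum_eq_single (lm a)]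
    · rw [Finsupp.sum, Finset.sum_eq_single (lm b)]
      · rw [if_pos rfl]
      · intro m hm hne
        have h1 : m < lm b := lt_of_le_of_ne (aux_le_lm hm) hne
        exact if_neg (hmo _ _ _ h1).1.ne
      · intro h; exact absurd (aux_lm_mem_support hb) h
    · intro m hm hne
      have h1 : m < lm a := lt_of_le_of_ne (aux_le_lm hm) hne
      rw [Finsupp.sum]
      apply Finset.sum_eq_zero
      intro m2 hm2
      have h2 : m * m2 < lm a * lm b :=
        lt_of_lt_of_le (hmo _ _ _ h1).2 (aux_mul_le hmo (aux_le_lm hm2) (lm a)).1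
      exact if_neg h2.ne
    · intro h; exact absurd (aux_lm_mem_support ha) h
  have hne : (a * b).coeff (lm a * lm b) ≠ 0 := by
    rw [hcoeff]
    exact mul_ne_zero (Finsupp.mem_support_iff.1 (aux_lm_mem_support ha))
      (Finsupp.mem_support_iff.1 (aux_lm_mem_support hb))
  have hmem : lm a * lm b ∈ (a * b).coeff.support := Finsupp.mem_support_iff.2 hne
  have hab : a * b ≠ 0 := fun h => by simp [h] at hmem
  refine ⟨hab, le_antisymm ?_ (aux_le_lm hmem), hcoeff⟩
  obtain ⟨y, hy, z, hz, hyz⟩ := Finset.mem_mul.1 (MonoidAlgebra.support_coeff_mul_subset a b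
    (aux_lm_mem_support hab))
  rw [← hyz]
  exact le_trans (aux_mul_le hmo (aux_le_lm hz) y).1 (aux_mul_le hmo (aux_le_lm hy) (lm b)).2

lemma aux_lm_ugv (hmo : MonomialOrder' X) {g : MonoidAlgebra K (FreeMonoid X)}
    (hg0 : g ≠ 0) (u v : FreeMonoid X) {c : K} (hc : c ≠ 0) :
    MonoidAlgebra.single u c * g * MonoidAlgebra.single v (1 : K) ≠ 0 ∧
    lm (MonoidAlgebra.single u c * g * MonoidAlgebra.single v (1 : K)) = u * lm g * v ∧
    (MonoidAlgebra.single u c * g * MonoidAlgebra.single v (1 : K)).coeff (u * lm g * v)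
      = c * g.coeff (lm g) := by
  have hu0 : MonoidAlgebra.single u c ≠ (0 : MonoidAlgebra K (FreeMonoid X)) :=
    fun h => hc (MonoidAlgebra.single_eq_zero.1 h)
  have hv0 : MonoidAlgebra.single v (1 : K) ≠ (0 : MonoidAlgebra K (FreeMonoid X)) :=
    fun h => one_ne_zero (MonoidAlgebra.single_eq_zero.1 h)
  obtain ⟨hug0, hlmug, hcug⟩ := aux_lm_mul hmo hu0 hg0
  rw [aux_lm_single hc] at hlmug hcug
  obtain ⟨hh0, hlmh, hch⟩ := aux_lm_mul hmo hug0 hv0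
  rw [hlmug, aux_lm_single (one_ne_zero (α := K))] at hlmh hch
  refine ⟨hh0, hlmh, ?_⟩
  rw [hch, hcug, MonoidAlgebra.coeff_single, MonoidAlgebra.coeff_single, Finsupp.single_eq_same, Finsupp.single_eq_same, mul_one]

lemma aux_dW_eq (hgr : GradedOrder X) {f : MonoidAlgebra K (FreeMonoid X)} (hf : f ≠ 0) :
    dW f = (lm f).length := by
  apply le_antisymm
  · apply Finset.sup_le
    intro m hm
    by_contra h
    push_neg at h
    exact absurd (hgr _ _ h) (not_lt.2 (aux_le_lm hm))
  · exact Finset.le_sup (aux_lm_mem_support hf)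

lemma aux_span_support (G : Set (MonoidAlgebra K (FreeMonoid X)))
    {f : MonoidAlgebra K (FreeMonoid X)} (hf : f ∈ TwoSidedIdeal.span (LMset G))
    {m : FreeMonoid X} (hm : m ∈ f.coeff.support) :
    ∃ g ∈ G, g ≠ 0 ∧ ∃ u v : FreeMonoid X, m = u * lm g * v := by
  classical
  set C : Set (MonoidAlgebra K (FreeMonoid X)) :=
    {f | ∀ m ∈ f.coeff.support, ∃ g ∈ G, g ≠ 0 ∧ ∃ u v : FreeMonoid X, m = u * lm g * v} with hC
  have hzero : (0 : MonoidAlgebra K (FreeMonoid X)) ∈ C := by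
    intro m hm; simp at hm
  have hadd : ∀ {x y : MonoidAlgebra K (FreeMonoid X)}, x ∈ C → y ∈ C → x + y ∈ C := by
    intro x y hx hy m hm
    rcases Finset.mem_union.1 (Finsupp.support_add (g₁ := x.coeff) (g₂ := y.coeff) hm) with h | h
    exacts [hx m h, hy m h]
  have hneg : ∀ {x : MonoidAlgebra K (FreeMonoid X)}, x ∈ C → -x ∈ C := by
    intro x hx m hm
    rw [MonoidAlgebra.coeff_neg, Finsupp.support_neg] at hm
    exact hx m hm
  have hml : ∀ {x y : MonoidAlgebra K (FreeMonoid X)}, y ∈ C → x * y ∈ C := by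
    intro x y hy m hm
    obtain ⟨p, hp, q, hq, rfl⟩ := Finset.mem_mul.1 (MonoidAlgebra.support_coeff_mul_subset x y hm)
    obtain ⟨g, hg, hg0, u, v, rfl⟩ := hy q hq
    exact ⟨g, hg, hg0, p * u, v, by simp [mul_assoc]⟩
  have hmr : ∀ {x y : MonoidAlgebra K (FreeMonoid X)}, x ∈ C → x * y ∈ C := by
    intro x y hx m hm
    obtain ⟨p, hp, q, hq, rfl⟩ := Finset.mem_mul.1 (MonoidAlgebra.support_coeff_mul_subset x y hm)
    obtain ⟨g, hg, hg0, u, v, rfl⟩ := hx p hp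
    exact ⟨g, hg, hg0, u, v * q, by simp [mul_assoc]⟩
  have hsub : LMset G ⊆ (TwoSidedIdeal.mk' C hzero hadd hneg hml hmr : Set _) := by
    rintro _ ⟨g, ⟨hgG, hg0⟩, rfl⟩
    rw [SetLike.mem_coe, TwoSidedIdeal.mem_mk']
    intro m hm
    have hg0' : g ≠ 0 := fun h => hg0 (by simp [h])
    rw [MonoidAlgebra.coeff_single] at hm
    have hmeq : m = lm g := Finset.mem_singleton.1 (Finsupp.support_single_subset hm)
    exact ⟨g, hgG, hg0', 1, 1, by simp [hmeq]⟩
  have := TwoSidedIdeal.mem_span_iff.1 hf _ hsub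
  rw [TwoSidedIdeal.mem_mk'] at this
  exact this m hm

lemma aux_lm_sub {f h : MonoidAlgebra K (FreeMonoid X)}
    (hlm : lm h = lm f) (hc : h.coeff (lm f) = f.coeff (lm f)) (hne : f - h ≠ 0) :
    lm (f - h) < lm f := by
  have h1 : lm (f - h) ∈ (f - h).coeff.support := aux_lm_mem_support hne
  have h2 : (f - h).coeff (lm f) = 0 := by
    rw [MonoidAlgebra.coeff_sub, Finsupp.sub_apply, hc, sub_self]
  have h3 : lm (f - h) ≠ lm f := by
    intro he
    exact (Finsupp.mem_support_iff.1 h1) (he ▸ h2)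
  have h4 : lm (f - h) ≤ lm f := by
    have hsub : (f - h).coeff.support ⊆ f.coeff.support ∪ h.coeff.support := by
      intro x hx
      rw [MonoidAlgebra.coeff_sub, sub_eq_add_neg] at hx
      rcases Finset.mem_union.1 (Finsupp.support_add hx) with hh | hh
      · exact Finset.mem_union_left _ hh
      · rw [Finsupp.support_neg] at hh
        exact Finset.mem_union_right _ hh
    rcases Finset.mem_union.1 (hsub h1) with hh | hh
    · exact aux_le_lm hh
    · exact hlm ▸ aux_le_lm hh
  exact lt_of_le_of_ne h4 h3

/-- If `⟨LM(I)⟩ = ⟨LM(𝒢)⟩` for a graded monomial ordering, then every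
nonzero `f ∈ I` has a Gröbner presentation `f = Σⱼ λⱼ uⱼ gⱼ vⱼ` with `gⱼ ∈ 𝒢`,
`uⱼ LM(gⱼ) vⱼ ≠ 0`, `LM(f) ≽ LM(uⱼ gⱼ vⱼ)` and `d(uⱼ) + d(gⱼ) + d(vⱼ) ≤ d(f)`. -/
theorem stmt19 (hgr : GradedOrder X) (hmo : MonomialOrder' X)
    (hwf : WellFoundedLT (FreeMonoid X))
    (I : TwoSidedIdeal (MonoidAlgebra K (FreeMonoid X)))
    (G : Set (MonoidAlgebra K (FreeMonoid X))) (hGI : G ⊆ (I : Set _))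
    (hGB : TwoSidedIdeal.span (LMset (I : Set (MonoidAlgebra K (FreeMonoid X)))) =
      TwoSidedIdeal.span (LMset G)) :
    ∀ f ∈ I, f ≠ 0 →
      ∃ (n : ℕ) (lam : Fin n → K) (u v : Fin n → FreeMonoid X)
        (g : Fin n → MonoidAlgebra K (FreeMonoid X)),
        (∀ j, g j ∈ G) ∧ (∀ j, g j ≠ 0) ∧
        f = ∑ j, MonoidAlgebra.single (u j) (lam j) * g j * MonoidAlgebra.single (v j) 1 ∧
        (∀ j, MonoidAlgebra.single (u j) (1 : K) * MonoidAlgebra.single (lm (g j)) (1 : K) *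
            MonoidAlgebra.single (v j) (1 : K) ≠ 0) ∧
        (∀ j, lm (MonoidAlgebra.single (u j) (1 : K) * g j *
            MonoidAlgebra.single (v j) (1 : K)) ≤ lm f) ∧
        (∀ j, (u j).length + dW (g j) + (v j).length ≤ dW f) := by
  suffices H : ∀ m : FreeMonoid X, ∀ f, f ∈ I → f ≠ 0 → lm f = m →
      ∃ (n : ℕ) (lam : Fin n → K) (u v : Fin n → FreeMonoid X)
        (g : Fin n → MonoidAlgebra K (FreeMonoid X)),
        (∀ j, g j ∈ G) ∧ (∀ j, g j ≠ 0) ∧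
        f = ∑ j, MonoidAlgebra.single (u j) (lam j) * g j * MonoidAlgebra.single (v j) 1 ∧
        (∀ j, MonoidAlgebra.single (u j) (1 : K) * MonoidAlgebra.single (lm (g j)) (1 : K) *
            MonoidAlgebra.single (v j) (1 : K) ≠ 0) ∧
        (∀ j, lm (MonoidAlgebra.single (u j) (1 : K) * g j *
            MonoidAlgebra.single (v j) (1 : K)) ≤ lm f) ∧
        (∀ j, (u j).length + dW (g j) + (v j).length ≤ dW f) by
    intro f hf hf0
    exact H (lm f) f hf hf0 rfl
  intro m
  refine hwf.wf.induction (C := fun m => ∀ f, f ∈ I → f ≠ 0 → lm f = m →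
      ∃ (n : ℕ) (lam : Fin n → K) (u v : Fin n → FreeMonoid X)
        (g : Fin n → MonoidAlgebra K (FreeMonoid X)),
        (∀ j, g j ∈ G) ∧ (∀ j, g j ≠ 0) ∧
        f = ∑ j, MonoidAlgebra.single (u j) (lam j) * g j * MonoidAlgebra.single (v j) 1 ∧
        (∀ j, MonoidAlgebra.single (u j) (1 : K) * MonoidAlgebra.single (lm (g j)) (1 : K) *
            MonoidAlgebra.single (v j) (1 : K) ≠ 0) ∧
        (∀ j, lm (MonoidAlgebra.single (u j) (1 : K) * g j *
            MonoidAlgebra.single (v j) (1 : K)) ≤ lm f) ∧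
        (∀ j, (u j).length + dW (g j) + (v j).length ≤ dW f)) m ?_
  clear m
  intro x ih f hfI hf0 hlmx
  subst hlmx
  -- extract a divisor of the leading monomial
  have hfLM : MonoidAlgebra.single (lm f) (1 : K) ∈ TwoSidedIdeal.span (LMset G) := by
    rw [← hGB]
    exact TwoSidedIdeal.subset_span ⟨f, ⟨hfI, by simpa using hf0⟩, rfl⟩
  have hlmmem : lm f ∈ (MonoidAlgebra.single (lm f) (1 : K)).coeff.support := by
    rw [MonoidAlgebra.coeff_single, Finsupp.support_single_ne_zero _ (one_ne_zero (α := K))]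
    exact Finset.mem_singleton_self _
  obtain ⟨g, hgG, hg0, u, v, huv⟩ := aux_span_support G hfLM hlmmem
  have hcne : f.coeff (lm f) ≠ 0 := Finsupp.mem_support_iff.1 (aux_lm_mem_support hf0)
  have hbne : g.coeff (lm g) ≠ 0 := Finsupp.mem_support_iff.1 (aux_lm_mem_support hg0)
  set c : K := f.coeff (lm f) * (g.coeff (lm g))⁻¹ with hc
  have hcne' : c ≠ 0 := mul_ne_zero hcne (inv_ne_zero hbne)
  obtain ⟨hh0, hlmh, hch⟩ := aux_lm_ugv hmo hg0 u v hcne'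
  set h : MonoidAlgebra K (FreeMonoid X) :=
    MonoidAlgebra.single u c * g * MonoidAlgebra.single v (1 : K) with hhdef
  have hlmh' : lm h = lm f := by rw [hlmh, ← huv]
  have hchc : h.coeff (lm f) = f.coeff (lm f) := by
    have e : h.coeff (lm f) = c * g.coeff (lm g) := by rw [huv]; exact hch
    rw [e, hc, mul_assoc, inv_mul_cancel₀ hbne, mul_one]
  have hhI : h ∈ I := I.mul_mem_right _ _ (I.mul_mem_left _ _ (hGI hgG))
  -- facts used in both cases
  obtain ⟨_, hlm1, _⟩ := aux_lm_ugv hmo hg0 u v (one_ne_zero (α := K))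
  have hdeg0 : u.length + dW g + v.length ≤ dW f := by
    rw [aux_dW_eq hgr hf0, aux_dW_eq hgr hg0, huv, FreeMonoid.length_mul,
      FreeMonoid.length_mul]
  have hnz0 : MonoidAlgebra.single u (1 : K) * MonoidAlgebra.single (lm g) (1 : K) *
      MonoidAlgebra.single (v) (1 : K) ≠ 0 := by
    rw [MonoidAlgebra.single_mul_single, MonoidAlgebra.single_mul_single]
    simp only [one_mul]
    exact fun hh => one_ne_zero (MonoidAlgebra.single_eq_zero.1 hh)
  by_cases hfh : f - h = 0
  · -- f = h : single term presentation
    refine ⟨1, fun _ => c, fun _ => u, fun _ => v, fun _ => g, fun _ => hgG, fun _ => hg0,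
      ?_, fun _ => hnz0, fun _ => ?_, fun _ => hdeg0⟩
    · rw [Fin.sum_univ_one, ← hhdef]
      exact sub_eq_zero.1 hfh
    · rw [hlm1, ← huv]
  · -- recurse on f - h
    have hlt : lm (f - h) < lm f := aux_lm_sub hlmh' hchc hfh
    have hfhI : f - h ∈ I := I.sub_mem hfI hhI
    obtain ⟨n, lam, uu, vv, gg, h1, h2, h3, h4, h5, h6⟩ :=
      ih (lm (f - h)) hlt (f - h) hfhI hfh rfl
    have hdW : dW (f - h) ≤ dW f := by
      rw [aux_dW_eq hgr hfh, aux_dW_eq hgr hf0]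
      by_contra hcon
      push_neg at hcon
      exact absurd (hgr _ _ hcon) (not_lt.2 hlt.le)
    refine ⟨n + 1, Fin.cons c lam, Fin.cons u uu, Fin.cons v vv, Fin.cons g gg,
      fun j => ?_, fun j => ?_, ?_, fun j => ?_, fun j => ?_, fun j => ?_⟩
    · refine Fin.cases hgG (fun i => h1 i) j
    · refine Fin.cases hg0 (fun i => h2 i) j
    · rw [Fin.sum_univ_succ]
      simp only [Fin.cons_zero, Fin.cons_succ]
      rw [← h3, ← hhdef]
      abel
    · refine Fin.cases hnz0 (fun i => h4 i) j
    · refine Fin.cases ?_ (fun i => ?_) j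
      · simp only [Fin.cons_zero]
        rw [hlm1, ← huv]
      · simp only [Fin.cons_succ]
        exact le_trans (h5 i) hlt.le
    · refine Fin.cases hdeg0 (fun i => ?_) j
      · simp only [Fin.cons_succ]
        exact le_trans (h6 i) hdW
end
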